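/- Let A be an h×h real matrix and B an h×h real matrix. Then for any t ≥ 0, the matrix exponential of the 2h×2h block upper triangular matrix [[A, B],[0, A]] times t has upper-right h×h block equal to ∫₀ᵗ exp(A v) B exp(A (t−v)) dv. -/

import Mathlib

open NormedSpace

namespace VanLoan
variable {h : ℕ}

section linfty
attribute [local instance] Matrix.linftyOpNormedRing Matrix.linftyOpNormedAlgebra

variable (A B : Matrix (Fin h) (Fin h) ℝ)

noncomputable def W (s : ℝ) : Matrix (Fin h) (Fin h) ℝ :=
  ∫ v in (0:ℝ)..s, exp (v • A) * B * exp ((-v) • A)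

lemma cont_g : Continuous (fun v : ℝ => exp (v • A) * B * exp ((-v) • A)) :=
  ((exp_continuous.comp (continuous_id.smul continuous_const)).mul continuous_const).mul
    (exp_continuous.comp (continuous_id.neg.smul continuous_const))

lemma hasDerivAt_W (s : ℝ) :
    HasDerivAt (W A B) (exp (s • A) * B * exp ((-s) • A)) s :=
  ((cont_g A B).integral_hasStrictDerivAt 0 s).hasDerivAt

lemma exp_neg_mul_exp (s : ℝ) {k : Type*} [Fintype k] [DecidableEq k] (M : Matrix k k ℝ) :
    exp ((-s) • M) * exp (s • M) = 1 := by
  letI : NormedRing (Matrix k k ℝ) := Matrix.linftyOpNormedRing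
  letI : NormedAlgebra ℝ (Matrix k k ℝ) := Matrix.linftyOpNormedAlgebra
  rw [← Matrix.exp_add_of_commute _ _ (((Commute.refl M).smul_left _).smul_right _)]
  simp

lemma hasDerivAt_X (s : ℝ) :
    HasDerivAt (fun u => W A B u * exp (u • A))
      (exp (s • A) * B + (W A B s * exp (s • A)) * A) s := by
  have := (hasDerivAt_W A B s).mul (hasDerivAt_exp_smul_const A s)
  convert this using 1 <;> try rfl
  simp only [mul_assoc]
  erw [exp_neg_mul_exp, mul_one]
  rfl

noncomputable def e11 : Matrix (Fin h) (Fin h) ℝ →L[ℝ] Matrix (Fin h ⊕ Fin h) (Fin h ⊕ Fin h) ℝ :=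
  LinearMap.toContinuousLinearMap
    { toFun := fun P => Matrix.fromBlocks P 0 0 0
      map_add' := fun P Q => by ext (i|i) (j|j) <;> simp [Matrix.fromBlocks]
      map_smul' := fun c P => by ext (i|i) (j|j) <;> simp [Matrix.fromBlocks] }

noncomputable def e12 : Matrix (Fin h) (Fin h) ℝ →L[ℝ] Matrix (Fin h ⊕ Fin h) (Fin h ⊕ Fin h) ℝ :=
  LinearMap.toContinuousLinearMap
    { toFun := fun P => Matrix.fromBlocks 0 P 0 0
      map_add' := fun P Q => by ext (i|i) (j|j) <;> simp [Matrix.fromBlocks]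
      map_smul' := fun c P => by ext (i|i) (j|j) <;> simp [Matrix.fromBlocks] }

noncomputable def e22 : Matrix (Fin h) (Fin h) ℝ →L[ℝ] Matrix (Fin h ⊕ Fin h) (Fin h ⊕ Fin h) ℝ :=
  LinearMap.toContinuousLinearMap
    { toFun := fun P => Matrix.fromBlocks 0 0 0 P
      map_add' := fun P Q => by ext (i|i) (j|j) <;> simp [Matrix.fromBlocks]
      map_smul' := fun c P => by ext (i|i) (j|j) <;> simp [Matrix.fromBlocks] }

lemma fromBlocks_eq_sum (P Q R : Matrix (Fin h) (Fin h) ℝ) :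
    Matrix.fromBlocks P Q 0 R = e11 P + e12 Q + e22 R := by
  have h11 : e11 P = Matrix.fromBlocks P 0 0 0 := rfl
  have h12 : e12 Q = Matrix.fromBlocks 0 Q 0 0 := rfl
  have h22 : e22 R = Matrix.fromBlocks 0 0 0 R := rfl
  rw [h11, h12, h22]
  ext (i|i) (j|j) <;> simp [Matrix.fromBlocks]

lemma hasDerivAt_fromBlocks {f g k : ℝ → Matrix (Fin h) (Fin h) ℝ}
    {f' g' k' : Matrix (Fin h) (Fin h) ℝ} {s : ℝ}
    (hf : HasDerivAt f f' s) (hg : HasDerivAt g g' s) (hk : HasDerivAt k k' s) :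
    HasDerivAt (fun u => Matrix.fromBlocks (f u) (g u) 0 (k u))
      (Matrix.fromBlocks f' g' 0 k') s := by
  simp only [fromBlocks_eq_sum]
  exact ((e11.hasFDerivAt.comp_hasDerivAt s hf).add
    (e12.hasFDerivAt.comp_hasDerivAt s hg)).add (e22.hasFDerivAt.comp_hasDerivAt s hk)

/-- the candidate fundamental solution -/
noncomputable def F (s : ℝ) : Matrix (Fin h ⊕ Fin h) (Fin h ⊕ Fin h) ℝ :=
  Matrix.fromBlocks (exp (s • A)) (W A B s * exp (s • A)) 0 (exp (s • A))

lemma hasDerivAt_F (s : ℝ) :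
    HasDerivAt (F A B) (F A B s * Matrix.fromBlocks A B 0 A) s := by
  have hd := hasDerivAt_fromBlocks (hasDerivAt_exp_smul_const A s)
    (hasDerivAt_X A B s) (hasDerivAt_exp_smul_const A s)
  convert hd using 1 <;> try rfl
  rw [F, Matrix.fromBlocks_multiply]
  simp [add_comm]
  rfl

lemma F_mul_exp_neg (s : ℝ) :
    F A B s * exp ((-s) • Matrix.fromBlocks A B 0 A) = 1 := by
  set M := Matrix.fromBlocks A B 0 A with hM
  have key : ∀ u : ℝ, HasDerivAt (fun s => F A B s * exp ((-s) • M)) 0 u := by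
    intro u
    have he : HasDerivAt (fun s : ℝ => exp ((-s) • M)) (-(M * exp ((-u) • M))) u := by
      have h1 : HasDerivAt (fun s : ℝ => -s) (-1) u := (hasDerivAt_id u).neg
      have h2 := hasDerivAt_exp_smul_const' (𝕂 := ℝ) M (-u)
      have := h2.scomp u h1
      simp [Function.comp_def, neg_smul] at this ⊢
      exact this
    have := (hasDerivAt_F A B u).mul he
    convert this using 1 <;> try rfl
    have hcomm : M * exp ((-u) • M) = exp ((-u) • M) * M :=
      (((Commute.refl M).smul_right (-u)).exp_right).eq
    rw [mul_neg, mul_assoc, hcomm, ← mul_assoc]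
    simp
  have hconst : ∀ s : ℝ, F A B s * exp ((-s) • M) = F A B 0 * exp ((-(0:ℝ)) • M) := by
    intro s
    exact is_const_of_deriv_eq_zero (fun u => (key u).differentiableAt)
      (fun u => (key u).deriv) s 0
  rw [hconst s]
  simp [F, W, intervalIntegral.integral_same, Matrix.fromBlocks_one]

lemma exp_eq_F (s : ℝ) : exp (s • Matrix.fromBlocks A B 0 A) = F A B s := by
  set M := Matrix.fromBlocks A B 0 A
  have h1 := F_mul_exp_neg A B s
  have h2 : exp ((-s) • M) * exp (s • M) = 1 := exp_neg_mul_exp s M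
  calc exp (s • M) = 1 * exp (s • M) := (one_mul _).symm
    _ = F A B s * exp ((-s) • M) * exp (s • M) := by rw [h1]
    _ = F A B s * (exp ((-s) • M) * exp (s • M)) := by rw [mul_assoc]
    _ = F A B s := by rw [h2, mul_one]

lemma X_eq_integral (t : ℝ) :
    W A B t * exp (t • A) = ∫ v in (0:ℝ)..t, exp (v • A) * B * exp ((t - v) • A) := by
  have hsplit : ∀ v : ℝ, exp ((t - v) • A) = exp ((-v) • A) * exp (t • A) := by
    intro v
    rw [← Matrix.exp_add_of_commute _ _ (((Commute.refl A).smul_left _).smul_right _)]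
    congr 1
    module
  have : (∫ v in (0:ℝ)..t, exp (v • A) * B * exp ((t - v) • A))
      = ∫ v in (0:ℝ)..t, (exp (v • A) * B * exp ((-v) • A)) * exp (t • A) := by
    congr 1
    ext v
    rw [hsplit v, ← mul_assoc]
  rw [this]
  let L : Matrix (Fin h) (Fin h) ℝ →L[ℝ] Matrix (Fin h) (Fin h) ℝ :=
    (ContinuousLinearMap.mul ℝ (Matrix (Fin h) (Fin h) ℝ)).flip (exp (t • A))
  have hint := (cont_g A B).intervalIntegrable (μ := MeasureTheory.volume) 0 t
  have := L.intervalIntegral_comp_comm hint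
  simpa [L, W] using this.symm

/-- the key scalar entry identity, provable in any-norm world -/
lemma entry_key (A B : Matrix (Fin h) (Fin h) ℝ) (t : ℝ) (i j : Fin h) :
    (exp (t • Matrix.fromBlocks A B 0 A)) (Sum.inl i) (Sum.inr j)
      = ∫ v in (0:ℝ)..t, (exp (v • A) * B * exp ((t - v) • A)) i j := by
  have h1 := exp_eq_F A B t
  have h2 := X_eq_integral A B t
  have lhs : (exp (t • Matrix.fromBlocks A B 0 A)) (Sum.inl i) (Sum.inr j)
      = (W A B t * exp (t • A)) i j := by
    rw [h1]; rfl
  rw [lhs, h2]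
  -- entry of interval integral
  let E : Matrix (Fin h) (Fin h) ℝ →L[ℝ] ℝ :=
    LinearMap.toContinuousLinearMap
      ((LinearMap.proj j).comp (LinearMap.proj (R := ℝ) (φ := fun _ : Fin h => Fin h → ℝ) i))
  have hint := (show Continuous (fun v : ℝ => exp (v • A) * B * exp ((t - v) • A)) from
    ((exp_continuous.comp (continuous_id.smul continuous_const)).mul continuous_const).mul
      (exp_continuous.comp ((continuous_const.sub continuous_id).smul continuous_const))).intervalIntegrable (μ := MeasureTheory.volume) 0 t
  exact (E.intervalIntegral_comp_comm hint).symm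

end linfty

lemma cont_integrand (A B : Matrix (Fin h) (Fin h) ℝ) (t : ℝ) :
    Continuous (fun v : ℝ => exp (v • A) * B * exp ((t - v) • A)) := by
  letI : NormedRing (Matrix (Fin h) (Fin h) ℝ) := Matrix.linftyOpNormedRing
  letI : NormedAlgebra ℝ (Matrix (Fin h) (Fin h) ℝ) := Matrix.linftyOpNormedAlgebra
  letI : NormedAlgebra ℚ (Matrix (Fin h) (Fin h) ℝ) := Matrix.linftyOpNormedAlgebra
  exact ((exp_continuous.comp (continuous_id.smul continuous_const)).mul continuous_const).mul
    (exp_continuous.comp ((continuous_const.sub continuous_id).smul continuous_const))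

end VanLoan

attribute [local instance] Matrix.normedAddCommGroup Matrix.normedSpace

/-- Van Loan's formula: the upper-right block of the matrix exponential of the
block upper triangular matrix `[[A, B], [0, A]]` times `t` equals
`∫₀ᵗ exp(A v) B exp(A (t−v)) dv`. -/
theorem vanLoan_block_exp {h : ℕ} (A B : Matrix (Fin h) (Fin h) ℝ) (t : ℝ) (ht : 0 ≤ t) :
    (exp (t • Matrix.fromBlocks A B 0 A)).toBlocks₁₂ =
      ∫ v in (0:ℝ)..t, exp (v • A) * B * exp ((t - v) • A) := by
  ext i j
  have hb := VanLoan.entry_key A B t i j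
  have hi := (VanLoan.cont_integrand A B t).intervalIntegrable (μ := MeasureTheory.volume) 0 t
  let E : Matrix (Fin h) (Fin h) ℝ →L[ℝ] ℝ :=
    LinearMap.toContinuousLinearMap
      ((LinearMap.proj j).comp (LinearMap.proj (R := ℝ) (φ := fun _ : Fin h => Fin h → ℝ) i))
  have h2 := E.intervalIntegral_comp_comm hi
  calc (exp (t • Matrix.fromBlocks A B 0 A)).toBlocks₁₂ i j
      = ∫ v in (0:ℝ)..t, (exp (v • A) * B * exp ((t - v) • A)) i j := hb
    _ = (∫ v in (0:ℝ)..t, exp (v • A) * B * exp ((t - v) • A)) i j := h2
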